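/- Let n, k be such that k(k+1)/2 > n. The set of symmetric n×n matrices C for which there exists a first-order critical point V ∈ ℝ^{k×n} of the problem min ⟨C, VᵀV⟩ subject to unit-norm columns with rank(V) = k has Lebesgue measure zero in the space of symmetric matrices. -/

import Mathlib

/-- The symmetric matrix determined by its upper-triangular entries. -/
noncomputable def symOfUpper (n : ℕ)
    (u : {p : Fin n × Fin n // p.1 ≤ p.2} → ℝ) :
    Matrix (Fin n) (Fin n) ℝ := fun i j =>
  if h : i ≤ j then u ⟨(i, j), h⟩ else u ⟨(j, i), (le_total i j).resolve_left h⟩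

namespace RDCP

open MeasureTheory

abbrev Idx (n : ℕ) := {p : Fin n × Fin n // p.1 ≤ p.2}

lemma card_Idx (m : ℕ) : Fintype.card (Idx m) = m * (m + 1) / 2 := by
  rw [← Fintype.card_congr (Sym2.sortEquiv (α := Fin m)), Sym2.card]
  simp [Nat.choose_two_right, Nat.mul_comm]

def hiEquiv (n r : ℕ) : {q : Idx n // r ≤ (q.val.1 : ℕ)} ≃ Idx (n - r) where
  toFun q := ⟨(⟨(q.val.val.1 : ℕ) - r, by
      have h1 := q.val.val.1.isLt; have h2 := q.prop; omega⟩,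
      ⟨(q.val.val.2 : ℕ) - r, by
      have h1 := q.val.val.2.isLt; have h2 := q.prop
      have h3 : (q.val.val.1 : ℕ) ≤ (q.val.val.2 : ℕ) := q.val.prop
      omega⟩), by
      simp only [Fin.mk_le_mk]
      have h3 : (q.val.val.1 : ℕ) ≤ (q.val.val.2 : ℕ) := q.val.prop
      omega⟩
  invFun p := ⟨⟨(⟨(p.val.1 : ℕ) + r, by have := p.val.1.isLt; omega⟩,
      ⟨(p.val.2 : ℕ) + r, by have := p.val.2.isLt; omega⟩), by
      simp only [Fin.mk_le_mk]
      have h3 : (p.val.1 : ℕ) ≤ (p.val.2 : ℕ) := p.prop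
      omega⟩, by simp⟩
  left_inv q := by
    have h2 := q.prop
    have h3 : (q.val.val.1 : ℕ) ≤ (q.val.val.2 : ℕ) := q.val.prop
    apply Subtype.ext; apply Subtype.ext; apply Prod.ext <;> apply Fin.ext <;> simp <;> omega
  right_inv p := by
    apply Subtype.ext; apply Prod.ext <;> apply Fin.ext <;> simp




lemma card_hi (n r : ℕ) :
    Fintype.card {q : Idx n // r ≤ (q.val.1 : ℕ)} = (n - r) * ((n - r) + 1) / 2 := by
  rw [Fintype.card_congr (hiEquiv n r), card_Idx]

lemma card_split (n r : ℕ) :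
    Fintype.card (Idx n) =
      (Finset.univ.filter fun q : Idx n => (q.val.1 : ℕ) < r).card
        + (n - r) * ((n - r) + 1) / 2 := by
  rw [← card_hi n r]
  have h1 : Fintype.card {q : Idx n // r ≤ (q.val.1 : ℕ)}
      = (Finset.univ.filter fun q : Idx n => ¬ ((q.val.1 : ℕ) < r)).card := by
    rw [Fintype.card_subtype]
    congr 1; ext q; simp [not_lt]
  rw [h1, Finset.card_filter_add_card_filter_not
    (s := (Finset.univ : Finset (Idx n))) (p := fun q => (q.val.1 : ℕ) < r), Finset.card_univ]

lemma half_lt {n k : ℕ} (hk : 2 * n < k * (k + 1)) : n < k * (k + 1) / 2 := by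
  have h2 : 2 ∣ k * (k + 1) := (Nat.even_mul_succ_self k).two_dvd
  omega

-- the fixed read set
def Uset (n r : ℕ) (ι : Fin n → Idx n) : Finset (Idx n) :=
  (Finset.univ.filter fun q : Idx n => (q.val.1 : ℕ) < r) ∪ Finset.univ.image ι

lemma mem_Uset_lo (n r : ℕ) (ι : Fin n → Idx n) {q : Idx n} (h : (q.val.1 : ℕ) < r) :
    q ∈ Uset n r ι :=
  Finset.mem_union_left _ (Finset.mem_filter.mpr ⟨Finset.mem_univ _, h⟩)

lemma mem_Uset_iota (n r : ℕ) (ι : Fin n → Idx n) (i : Fin n) : ι i ∈ Uset n r ι :=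
  Finset.mem_union_right _ (Finset.mem_image_of_mem _ (Finset.mem_univ i))

lemma card_Uset_lt (n k : ℕ) (hkn : k ≤ n) (hk : 2 * n < k * (k + 1))
    (ι : Fin n → Idx n) : (Uset n (n - k) ι).card < Fintype.card (Idx n) := by
  have h1 := card_split n (n - k)
  have h2 : n - (n - k) = k := by omega
  rw [h2] at h1
  have h3 : (Uset n (n - k) ι).card ≤
      (Finset.univ.filter fun q : Idx n => (q.val.1 : ℕ) < n - k).card + n := by
    refine (Finset.card_union_le _ _).trans ?_
    have := Finset.card_image_le (s := (Finset.univ : Finset (Fin n))) (f := ι)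
    simp only [Finset.card_univ, Fintype.card_fin] at this
    omega
  have h4 := half_lt hk
  omega


def Aread (n r : ℕ) (ι : Fin n → Idx n) (v : ↥(Uset n r ι) → ℝ) (l m : Fin n) : ℝ :=
  if h : (l : ℕ) < r ∧ l ≤ m then v ⟨⟨(l, m), h.2⟩, mem_Uset_lo n r ι h.1⟩
  else if h' : (m : ℕ) < r ∧ m ≤ l then v ⟨⟨(m, l), h'.2⟩, mem_Uset_lo n r ι h'.1⟩
  else 0

def Tread (n r : ℕ) (ι : Fin n → Idx n) (π : Equiv.Perm (Fin n))
    (v : ↥(Uset n r ι) → ℝ) (l i : Fin n) : ℝ :=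
  if (π i : ℕ) < r then (if l = π i then 1 else 0) else Aread n r ι v l (π i)

def Fr (n r : ℕ) : Finset (Fin n) := Finset.univ.filter fun l => (l : ℕ) < r

def Gcore (n r : ℕ) (ι : Fin n → Idx n) (π : Equiv.Perm (Fin n))
    (v : ↥(Uset n r ι) → ℝ) : Idx n → ℝ := fun p =>
  (∑ l ∈ Fr n r, ∑ m ∈ Fr n r,
      Tread n r ι π v l p.val.1 * Aread n r ι v l m * Tread n r ι π v m p.val.2)
    - (if p.val.1 = p.val.2 then v ⟨ι p.val.1, mem_Uset_iota n r ι p.val.1⟩ else 0)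

noncomputable def rstL (n r : ℕ) (ι : Fin n → Idx n) :
    (Idx n → ℝ) →L[ℝ] (↥(Uset n r ι) → ℝ) :=
  LinearMap.toContinuousLinearMap (LinearMap.funLeft ℝ ℝ Subtype.val)

noncomputable def Gmap (n r : ℕ) (ι : Fin n → Idx n) (π : Equiv.Perm (Fin n)) :
    (Idx n → ℝ) → (Idx n → ℝ) := fun u => Gcore n r ι π (rstL n r ι u)

lemma diff_eval {α : Type*} [Fintype α] (a : α) :
    Differentiable ℝ (fun v : α → ℝ => v a) :=
  (ContinuousLinearMap.proj a : (α → ℝ) →L[ℝ] ℝ).differentiable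

lemma diff_Aread (n r : ℕ) (ι : Fin n → Idx n) (l m : Fin n) :
    Differentiable ℝ (fun v => Aread n r ι v l m) := by
  unfold Aread
  split_ifs with h h'
  · exact diff_eval _
  · exact diff_eval _
  · exact differentiable_const 0

lemma diff_Tread (n r : ℕ) (ι : Fin n → Idx n) (π : Equiv.Perm (Fin n)) (l i : Fin n) :
    Differentiable ℝ (fun v => Tread n r ι π v l i) := by
  unfold Tread
  split_ifs with h h2
  exacts [differentiable_const _, differentiable_const _, diff_Aread n r ι l (π i)]

lemma diff_Gcore (n r : ℕ) (ι : Fin n → Idx n) (π : Equiv.Perm (Fin n)) :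
    Differentiable ℝ (Gcore n r ι π) := by
  rw [differentiable_pi]
  intro p
  unfold Gcore
  apply Differentiable.sub
  · apply Differentiable.fun_sum
    intro l _
    apply Differentiable.fun_sum
    intro m _
    exact ((diff_Tread n r ι π l p.val.1).mul (diff_Aread n r ι l m)).mul
      (diff_Tread n r ι π m p.val.2)
  · split_ifs with h
    · exact diff_eval _
    · exact differentiable_const 0

set_option synthInstance.maxHeartbeats 1000000 in
lemma null_range (n r : ℕ) (ι : Fin n → Idx n) (π : Equiv.Perm (Fin n))
    (hU : (Uset n r ι).card < Fintype.card (Idx n)) :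
    volume (Set.range (Gmap n r ι π)) = 0 := by
  have hGc := diff_Gcore n r ι π
  set L := rstL n r ι with hL
  have key : ∀ x : Idx n → ℝ, HasFDerivAt (Gmap n r ι π)
      ((fderiv ℝ (Gcore n r ι π) (L x)).comp L) x := fun x =>
    (hGc (L x)).hasFDerivAt.comp x L.hasFDerivAt
  rw [← Set.image_univ]
  refine addHaar_image_eq_zero_of_det_fderivWithin_eq_zero volume
    (f' := fun x => (fderiv ℝ (Gcore n r ι π) (L x)).comp L)
    (fun x _ => (key x).hasFDerivWithinAt) (fun x _ => ?_)
  haveI : FiniteDimensional ℝ (↥(Uset n r ι) → ℝ) := by infer_instance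
  by_contra hdet
  set f := ((fderiv ℝ (Gcore n r ι π) (L x)).comp L) with hf
  have hcoe : ((LinearMap.equivOfDetNeZero (f : (Idx n → ℝ) →ₗ[ℝ] (Idx n → ℝ)) hdet :
      (Idx n → ℝ) ≃ₗ[ℝ] (Idx n → ℝ)) : (Idx n → ℝ) →ₗ[ℝ] (Idx n → ℝ))
      = (f : (Idx n → ℝ) →ₗ[ℝ] (Idx n → ℝ)) := LinearEquiv.coe_ofIsUnitDet _
  have hsurj : Function.Surjective (f : (Idx n → ℝ) →ₗ[ℝ] (Idx n → ℝ)) := by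
    have he := (LinearMap.equivOfDetNeZero
      (f : (Idx n → ℝ) →ₗ[ℝ] (Idx n → ℝ)) hdet).surjective
    rwa [← LinearEquiv.coe_coe, hcoe] at he
  have htop : LinearMap.range (f : (Idx n → ℝ) →ₗ[ℝ] (Idx n → ℝ)) = ⊤ :=
    LinearMap.range_eq_top.mpr hsurj
  have hle : LinearMap.range (f : (Idx n → ℝ) →ₗ[ℝ] (Idx n → ℝ)) ≤
      LinearMap.range ((fderiv ℝ (Gcore n r ι π) (L x) :
        (↥(Uset n r ι) → ℝ) →L[ℝ] (Idx n → ℝ)) : (↥(Uset n r ι) → ℝ) →ₗ[ℝ] (Idx n → ℝ)) := by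
    rw [hf, ContinuousLinearMap.toLinearMap_comp]
    exact LinearMap.range_comp_le_range _ _
  have h1 : Module.finrank ℝ (LinearMap.range ((fderiv ℝ (Gcore n r ι π) (L x) :
      (↥(Uset n r ι) → ℝ) →L[ℝ] (Idx n → ℝ)) : (↥(Uset n r ι) → ℝ) →ₗ[ℝ] (Idx n → ℝ)))
      ≤ (Uset n r ι).card := by
    refine (LinearMap.finrank_range_le _).trans_eq ?_
    rw [Module.finrank_pi, Fintype.card_coe]
  have h2 := Submodule.finrank_mono hle
  rw [htop, finrank_top, Module.finrank_pi] at h2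
  omega


lemma cover (n k : ℕ) (hkn : k ≤ n) (ι : Fin n → Idx n)
    (hι₁ : Function.Injective ι) (hι₂ : ∀ i, n - k ≤ ((ι i).val.1 : ℕ))
    (u₀ : Idx n → ℝ) (y : Fin n → ℝ) (V : Matrix (Fin k) (Fin n) ℝ)
    (hV : V * (symOfUpper n u₀ + Matrix.diagonal y) = 0) (hrank : V.rank = k) :
    ∃ π : Equiv.Perm (Fin n), ∃ u, Gmap n (n - k) ι π u = u₀ := by
  classical
  set r := n - k with hr
  set M : Matrix (Fin n) (Fin n) ℝ := symOfUpper n u₀ + Matrix.diagonal y with hM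
  have hsym : ∀ i j, symOfUpper n u₀ i j = symOfUpper n u₀ j i := by
    intro i j
    unfold symOfUpper
    rcases le_or_gt i j with h | h
    · rcases le_or_gt j i with h' | h'
      · have hij : i = j := le_antisymm h h'
        subst hij; rfl
      · rw [dif_pos h, dif_neg (not_le.mpr h')]
    · rw [dif_neg (not_le.mpr h), dif_pos h.le]
  have hMsymm : ∀ i j, M i j = M j i := by
    intro i j
    simp only [hM, Matrix.add_apply, Matrix.diagonal_apply, hsym i j]
    congr 1
    by_cases h : i = j
    · subst h; rfl
    · rw [if_neg h, if_neg (Ne.symm h)]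
  set cols : Fin n → (Fin n → ℝ) := fun j x => M x j with hcols
  have hcolK : ∀ j, cols j ∈ LinearMap.ker V.mulVecLin := by
    intro j
    rw [LinearMap.mem_ker]
    funext a
    have h0 : V.mulVecLin (cols j) a = (V * M) a j := by
      simp [Matrix.mulVecLin_apply, Matrix.mulVec, dotProduct, Matrix.mul_apply, hcols]
    rw [h0, hV]
    rfl
  have hker : Module.finrank ℝ (LinearMap.ker V.mulVecLin) = n - k := by
    have h5 := LinearMap.finrank_range_add_finrank_ker V.mulVecLin
    rw [Module.finrank_pi, Fintype.card_fin] at h5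
    have h6 : Module.finrank ℝ (LinearMap.range V.mulVecLin) = V.rank := rfl
    omega
  obtain ⟨t, hts, htsp, htind⟩ := exists_linearIndependent ℝ (Set.range cols)
  have htfin : t.Finite := htind.setFinite
  haveI := htfin.fintype
  have hcardt : t.toFinset.card = Module.finrank ℝ (Submodule.span ℝ t) :=
    (finrank_span_set_eq_card htind).symm
  have hspanle : Submodule.span ℝ t ≤ LinearMap.ker V.mulVecLin := by
    rw [htsp]
    exact Submodule.span_le.mpr (Set.range_subset_iff.mpr hcolK)
  have htcard_le : t.toFinset.card ≤ r := by
    have h7 := Submodule.finrank_mono hspanle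
    omega
  have hsel : ∀ v ∈ t, ∃ j, cols j = v := fun v hv => hts hv
  set J₀ : Finset (Fin n) := t.toFinset.attach.image
    (fun v => (hsel v.1 (Set.mem_toFinset.mp v.2)).choose) with hJ₀
  have hJ₀card : J₀.card ≤ r := by
    refine le_trans Finset.card_image_le ?_
    rw [Finset.card_attach]
    exact htcard_le
  have hJ₀span : ∀ j, cols j ∈ Submodule.span ℝ (cols '' ↑J₀) := by
    intro j
    have h1 : t ⊆ cols '' ↑J₀ := by
      intro v hv
      refine ⟨(hsel v hv).choose, ?_, (hsel v hv).choose_spec⟩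
      simp only [hJ₀, Finset.coe_image, Set.mem_image]
      exact ⟨⟨v, Set.mem_toFinset.mpr hv⟩, Finset.mem_coe.mpr (Finset.mem_attach _ _), rfl⟩
    have h2 : cols j ∈ Submodule.span ℝ (Set.range cols) :=
      Submodule.subset_span (Set.mem_range_self j)
    rw [← htsp] at h2
    exact Submodule.span_mono h1 h2
  obtain ⟨J, hJ₀J, -, hJcard⟩ := Finset.exists_subsuperset_card_eq (Finset.subset_univ J₀)
    hJ₀card (by rw [Finset.card_univ, Fintype.card_fin]; omega)
  have hFr : (Fr n r).card = r := by
    have hEq : Fr n r = Finset.map (Fin.castLEEmb (by omega : r ≤ n)) Finset.univ := by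
      ext j
      simp only [Fr, Finset.mem_filter, Finset.mem_univ, true_and, Finset.mem_map,
        Fin.castLEEmb_apply, Fin.ext_iff, Fin.coe_castLE]
      constructor
      · intro hj; exact ⟨⟨(j : ℕ), hj⟩, rfl⟩
      · rintro ⟨i, hi⟩; rw [← hi]; exact i.isLt
    rw [hEq, Finset.card_map, Finset.card_univ, Fintype.card_fin]
  have hJJr : Fintype.card ↥J = Fintype.card ↥(Fr n r) := by
    rw [Fintype.card_coe, Fintype.card_coe, hJcard, hFr]
  set e₀ := Fintype.equivOfCardEq hJJr with he₀
  set π : Equiv.Perm (Fin n) := Equiv.extendSubtype e₀ with hπdef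
  have hπJ : ∀ j ∈ J, ((π j : Fin n) : ℕ) < r := by
    intro j hj
    have hmem := Equiv.extendSubtype_mem e₀ j hj
    exact (Finset.mem_filter.mp hmem).2
  have hmemspan : ∀ j : Fin n,
      cols j ∈ Submodule.span ℝ ((fun m => cols (π.symm m)) '' ↑(Fr n r)) := by
    intro j
    refine Submodule.span_mono ?_ (hJ₀span j)
    rintro x ⟨j₀, hj₀, rfl⟩
    refine ⟨π j₀, ?_, by simp⟩
    have hj₀J : j₀ ∈ J := hJ₀J hj₀
    exact Finset.mem_coe.mpr (Finset.mem_filter.mpr ⟨Finset.mem_univ _, hπJ j₀ hj₀J⟩)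
  have hcoef : ∀ j : Fin n, ∃ c : Fin n → ℝ,
      cols j = ∑ m ∈ Fr n r, c m • cols (π.symm m) := by
    intro j
    obtain ⟨l, hl, heq⟩ := (Finsupp.mem_span_image_iff_linearCombination ℝ).mp (hmemspan j)
    refine ⟨fun m => l m, ?_⟩
    rw [← heq, Finsupp.linearCombination_apply]
    exact Finsupp.sum_of_support_subset l
      (Finset.coe_subset.mp ((Finsupp.mem_supported ℝ l).mp hl)) _
      (fun i _ => zero_smul ℝ _)
  choose c hc using hcoef
  set u : Idx n → ℝ := fun q =>
    if (q.val.1 : ℕ) < r then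
      (if (q.val.2 : ℕ) < r then M (π.symm q.val.1) (π.symm q.val.2)
       else c (π.symm q.val.2) q.val.1)
    else Function.extend ι y (fun _ => 0) q with hu
  have hA : ∀ l m : Fin n, (l : ℕ) < r → (m : ℕ) < r →
      Aread n r ι (rstL n r ι u) l m = M (π.symm l) (π.symm m) := by
    intro l m hl hm
    unfold Aread
    rcases le_or_gt l m with h | h
    · rw [dif_pos ⟨hl, h⟩]
      show u ⟨(l, m), h⟩ = _
      simp [hu, hl, hm]
    · rw [dif_neg (fun hh => absurd hh.2 (not_le.mpr h)), dif_pos ⟨hm, h.le⟩]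
      show u ⟨(m, l), h.le⟩ = _
      simp only [hu, hm, hl, if_true, if_pos]
      exact hMsymm _ _
  have hT : ∀ m i : Fin n, (m : ℕ) < r → Tread n r ι π (rstL n r ι u) m i
      = if (π i : ℕ) < r then (if m = π i then 1 else 0) else c i m := by
    intro m i hm
    unfold Tread
    by_cases hi : (π i : ℕ) < r
    · rw [if_pos hi, if_pos hi]
    · rw [if_neg hi, if_neg hi]
      unfold Aread
      have hle : m ≤ π i := by rw [Fin.le_def]; omega
      rw [dif_pos ⟨hm, hle⟩]
      show u ⟨(m, π i), hle⟩ = c i m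
      simp [hu, hm, hi]
  have hcol : ∀ i x : Fin n,
      (∑ m ∈ Fr n r, Tread n r ι π (rstL n r ι u) m i * M x (π.symm m)) = M x i := by
    intro i x
    by_cases hi : (π i : ℕ) < r
    · rw [Finset.sum_congr rfl (fun m hm => by
        rw [hT m i (Finset.mem_filter.mp hm).2, if_pos hi])]
      have hsimp : ∀ m : Fin n, ((if m = π i then (1:ℝ) else 0) * M x (π.symm m))
          = if m = π i then M x (π.symm m) else 0 := by
        intro m; split_ifs <;> ring
      rw [Finset.sum_congr rfl fun m _ => hsimp m,
        Finset.sum_ite_eq' (Fr n r) (π i) (fun m => M x (π.symm m))]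
      simp [Fr, hi]
    · rw [Finset.sum_congr rfl (fun m hm => by
        rw [hT m i (Finset.mem_filter.mp hm).2, if_neg hi])]
      have h := congrFun (hc i) x
      simp only [Finset.sum_apply, Pi.smul_apply, smul_eq_mul] at h
      exact h.symm
  have hmain : ∀ p1 p2 : Fin n,
      (∑ l ∈ Fr n r, ∑ m ∈ Fr n r, Tread n r ι π (rstL n r ι u) l p1
        * Aread n r ι (rstL n r ι u) l m * Tread n r ι π (rstL n r ι u) m p2)
      = M p1 p2 := by
    intro p1 p2
    rw [Finset.sum_comm]
    have step2 : ∀ m ∈ Fr n r,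
        (∑ l ∈ Fr n r, Tread n r ι π (rstL n r ι u) l p1
          * Aread n r ι (rstL n r ι u) l m * Tread n r ι π (rstL n r ι u) m p2)
        = Tread n r ι π (rstL n r ι u) m p2 * M p1 (π.symm m) := by
      intro m hm
      have hm' := (Finset.mem_filter.mp hm).2
      rw [← Finset.sum_mul]
      have step1 : (∑ l ∈ Fr n r, Tread n r ι π (rstL n r ι u) l p1
          * Aread n r ι (rstL n r ι u) l m) = M p1 (π.symm m) := by
        rw [Finset.sum_congr rfl (fun l hl => by
          rw [hA l m (Finset.mem_filter.mp hl).2 hm', hMsymm (π.symm l) (π.symm m)])]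
        rw [hcol p1 (π.symm m)]
        exact hMsymm _ _
      rw [step1, mul_comm]
    rw [Finset.sum_congr rfl step2, hcol p2 p1]
  have hya : ∀ i : Fin n, u (ι i) = y i := by
    intro i
    simp only [hu]
    rw [if_neg (by have := hι₂ i; omega)]
    exact hι₁.extend_apply y (fun _ => 0) i
  refine ⟨π, u, ?_⟩
  funext p
  obtain ⟨⟨a, b⟩, hab⟩ := p
  show Gcore n r ι π (rstL n r ι u) ⟨(a, b), hab⟩ = u₀ ⟨(a, b), hab⟩
  unfold Gcore
  have hM' : M a b = u₀ ⟨(a, b), hab⟩ + (if a = b then y a else 0) := by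
    simp only [hM, Matrix.add_apply, Matrix.diagonal_apply]
    congr 1
    unfold symOfUpper
    rw [dif_pos hab]
  have hdiag : (if a = b then rstL n r ι u ⟨ι a, mem_Uset_iota n r ι a⟩ else 0)
      = (if a = b then y a else 0) := by
    split_ifs with h
    · exact hya a
    · rfl
  rw [hmain a b, hdiag, hM']
  ring



end RDCP

open MeasureTheory in
/-- For `k(k+1)/2 > n`, the set of symmetric `C` admitting a rank-`k`
first-order critical point `V` (i.e. `V(C + diag y) = 0` with
`yᵢ = ‖V cᵢ‖` and unit-norm columns) has Lebesgue measure zero. -/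
theorem rank_deficiency_critical_points
    (n k : ℕ) (hk : 2 * n < k * (k + 1)) :
    MeasureTheory.volume
      {u : {p : Fin n × Fin n // p.1 ≤ p.2} → ℝ |
        ∃ V : Matrix (Fin k) (Fin n) ℝ,
          (∀ i, ∑ a, (V a i) ^ 2 = 1) ∧
          V * (symOfUpper n u + Matrix.diagonal (fun i =>
            Real.sqrt (∑ a,
              (V.mulVec (fun j => symOfUpper n u j i)) a ^ 2))) = 0 ∧
          V.rank = k} = 0 := by
  classical
  by_cases hkn : k ≤ n
  · have hcard : n < Fintype.card {q : RDCP.Idx n // (n - k) ≤ (q.val.1 : ℕ)} := by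
      rw [RDCP.card_hi]
      have h2 : n - (n - k) = k := by omega
      rw [h2]
      exact RDCP.half_lt hk
    obtain ⟨emb⟩ := Function.Embedding.nonempty_of_card_le (α := Fin n)
      (β := {q : RDCP.Idx n // (n - k) ≤ (q.val.1 : ℕ)})
      (by rw [Fintype.card_fin]; exact hcard.le)
    set ι : Fin n → RDCP.Idx n := fun i => (emb i).val with hι
    have hι₁ : Function.Injective ι := fun i j hij =>
      emb.injective (Subtype.ext hij)
    have hι₂ : ∀ i, n - k ≤ (((ι i)).val.1 : ℕ) := fun i => (emb i).prop
    refine measure_mono_null ?_ (measure_iUnion_null (fun π : Equiv.Perm (Fin n) =>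
      RDCP.null_range n (n - k) ι π (RDCP.card_Uset_lt n k hkn hk ι)))
    rintro u₀ ⟨V, -, h2, h3⟩
    obtain ⟨π, u, huu⟩ := RDCP.cover n k hkn ι hι₁ hι₂ u₀ _ V h2 h3
    exact Set.mem_iUnion.mpr ⟨π, ⟨u, huu⟩⟩
  · have hempty : {u : {p : Fin n × Fin n // p.1 ≤ p.2} → ℝ |
        ∃ V : Matrix (Fin k) (Fin n) ℝ,
          (∀ i, ∑ a, (V a i) ^ 2 = 1) ∧
          V * (symOfUpper n u + Matrix.diagonal (fun i =>
            Real.sqrt (∑ a,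
              (V.mulVec (fun j => symOfUpper n u j i)) a ^ 2))) = 0 ∧
          V.rank = k} = ∅ := by
      apply Set.eq_empty_iff_forall_notMem.mpr
      rintro u ⟨V, -, -, h3⟩
      have hle := (V.rank_le_card_width).trans_eq (Fintype.card_fin n)
      rw [h3] at hle
      exact hkn hle
    rw [hempty]
    exact measure_empty
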